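/- Let X be a finite set with |X| > 2 and let d be any metric on X. Then there is no universally optimal d-private mechanism: there is no d-private channel M : X → Y → ℝ (Y finite nonempty) such that for every finite nonempty action set W, every loss function ℓ : W → X → ℝ, every prior π on X, every finite nonempty set Y', and every d-private channel M' : X → Y' → ℝ, one has U_ℓ[π⟩M] ≤ U_ℓ[π⟩M']. -/

import Mathlib

open Finset

/-- A channel from `X` to `Y`: nonnegative entries and each row sums to 1. -/
def IsChannel {X Y : Type} [Fintype Y] (M : X → Y → ℝ) : Prop :=
  (∀ x y, 0 ≤ M x y) ∧ ∀ x, ∑ y, M x y = 1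

/-- The `d`-privacy constraints on a channel. -/
def IsPrivate {X Y : Type} (d : X → X → ℝ) (M : X → Y → ℝ) : Prop :=
  ∀ x x' y, M x y ≤ Real.exp (d x x') * M x' y

/-- `d` is a metric on `X`. -/
def IsMetric {X : Type} (d : X → X → ℝ) : Prop :=
  (∀ x, d x x = 0) ∧ (∀ x x' : X, x ≠ x' → 0 < d x x') ∧
    (∀ x x', d x x' = d x' x) ∧ ∀ x y z, d x z ≤ d x y + d y z

/-- A prior on `X`. -/
def IsPrior {X : Type} [Fintype X] (π : X → ℝ) : Prop :=
  (∀ x, 0 ≤ π x) ∧ ∑ x, π x = 1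

/-- Posterior expected loss `U_ℓ[π⟩M]`. -/
noncomputable def postLoss {X Y W : Type} [Fintype X] [Fintype Y] [Fintype W] [Nonempty W]
    (π : X → ℝ) (M : X → Y → ℝ) (ℓ : W → X → ℝ) : ℝ :=
  ∑ y, Finset.univ.inf' Finset.univ_nonempty fun w => ∑ x, π x * M x y * ℓ w x

section UniversalOptimalityHelpers

private lemma one_minus_lip (F u u' : ℝ) (hF : 1 ≤ F)
    (h1 : u' ≤ F * u) (hu' : 0 ≤ u') (h2 : u' * (1 + F) ≤ F) :
    1 - u ≤ F * (1 - u') := by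
  have hFpos : (0:ℝ) < F := by linarith
  have hp : 0 ≤ (F - 1) * (F - u' * (1 + F)) :=
    mul_nonneg (by linarith) (by linarith)
  by_contra h'
  push_neg at h'
  nlinarith [mul_pos hFpos (sub_pos.mpr h')]

private lemma exp_ratio_mono {s t : ℝ} (h : s ≤ t) :
    Real.exp s / (1 + Real.exp s) ≤ Real.exp t / (1 + Real.exp t) := by
  have hs := Real.exp_pos s; have ht := Real.exp_pos t
  rw [div_le_div_iff₀ (by linarith) (by linarith)]
  have := Real.exp_le_exp.mpr h
  nlinarith

private lemma inf'_bool (f : Bool → ℝ) :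
    (Finset.univ.inf' Finset.univ_nonempty f) = min (f false) (f true) := by
  apply le_antisymm
  · exact le_min (Finset.inf'_le f (Finset.mem_univ false))
      (Finset.inf'_le f (Finset.mem_univ true))
  · refine Finset.le_inf' _ _ ?_
    intro b _
    cases b
    · exact min_le_left _ _
    · exact min_le_right _ _

end UniversalOptimalityHelpers

set_option maxHeartbeats 2000000 in
/-- Impossibility of universally optimal mechanisms: for `|X| > 2` no
`d`-private channel is optimal for all loss functions and priors. -/
theorem no_universally_optimal_mechanism
    {X : Type} [Fintype X] (hcard : 2 < Fintype.card X)
    (d : X → X → ℝ) (hd : IsMetric d) :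
    ¬ ∃ (Y : Type) (_ : Fintype Y) (_ : Nonempty Y) (M : X → Y → ℝ),
        IsChannel M ∧ IsPrivate d M ∧
        ∀ (W : Type) [Fintype W] [Nonempty W] (ℓ : W → X → ℝ)
          (π : X → ℝ), IsPrior π →
          ∀ (Y' : Type) [Fintype Y'] [Nonempty Y'] (M' : X → Y' → ℝ),
            IsChannel M' → IsPrivate d M' →
              postLoss π M ℓ ≤ postLoss π M' ℓ := by
  classical
  rintro ⟨Y, hYft, hYne, M, hMch, hMpriv, hopt⟩
  obtain ⟨hd0, hdpos, hdsymm, hdtri⟩ := hd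
  have hdnn : ∀ x x', 0 ≤ d x x' := by
    intro x x'
    by_cases h : x = x'
    · subst h; rw [hd0]
    · exact le_of_lt (hdpos _ _ h)
  -- choose the minimal pair (a, b)
  obtain ⟨a0, b0, hab0⟩ := Fintype.exists_pair_of_one_lt_card (by omega : 1 < Fintype.card X)
  have hPne : (univ.filter (fun q : X × X => q.1 ≠ q.2)).Nonempty :=
    ⟨(a0, b0), by simp [hab0]⟩
  obtain ⟨⟨a, b⟩, hq0mem, hq0min⟩ :=
    Finset.exists_min_image (univ.filter (fun q : X × X => q.1 ≠ q.2))
      (fun q => d q.1 q.2) hPne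
  have hab : a ≠ b := by
    have := (Finset.mem_filter.mp hq0mem).2
    simpa using this
  have hmin : ∀ x x' : X, x ≠ x' → d a b ≤ d x x' := by
    intro x x' hxx'
    exact hq0min (x, x') (by simp [hxx'])
  -- choose c ≠ a, b maximizing d · a
  have hQne : (univ.filter (fun x : X => x ≠ a ∧ x ≠ b)).Nonempty := by
    have hns : ¬ (univ : Finset X) ⊆ {a, b} := by
      intro hsub
      have h1 : Fintype.card X ≤ ({a, b} : Finset X).card := by
        simpa [Finset.card_univ] using Finset.card_le_card hsub
      have h2 : ({a, b} : Finset X).card ≤ 2 := Finset.card_insert_le _ _ |>.trans (by simp)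
      omega
    obtain ⟨c0, _, hc0⟩ := Finset.not_subset.mp hns
    refine ⟨c0, ?_⟩
    simp only [Finset.mem_insert, Finset.mem_singleton] at hc0
    push_neg at hc0
    simp [hc0.1, hc0.2]
  obtain ⟨c, hcmem, hcmax⟩ :=
    Finset.exists_max_image (univ.filter (fun x : X => x ≠ a ∧ x ≠ b)) (fun x => d x a) hQne
  have hca : c ≠ a := (Finset.mem_filter.mp hcmem).2.1
  have hcb : c ≠ b := (Finset.mem_filter.mp hcmem).2.2
  have hcmax' : ∀ x : X, x ≠ a → x ≠ b → d x a ≤ d c a := by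
    intro x h1 h2
    exact hcmax x (by simp [h1, h2])
  -- basic quantities
  set α := d a b with hα_def
  have hαpos : 0 < α := hdpos a b hab
  set E := Real.exp α with hE_def
  have hE1 : 1 < E := by
    have := Real.add_one_lt_exp (ne_of_gt hαpos); rw [hE_def]; linarith
  have hEpos : 0 < E := by linarith
  set ρ : X → ℝ := fun x => if x = b then α else d x a with hρ_def
  set h0 : X → ℝ := fun x => (E / (1 + E)) * Real.exp (-ρ x) with hh0_def
  have hρa : ρ a = 0 := by simp [hρ_def, hab, hd0]
  have hρb : ρ b = α := by simp [hρ_def]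
  have hρc : ρ c = d c a := by simp [hρ_def, hcb]
  have hρlip : ∀ x x', ρ x' ≤ ρ x + d x x' := by
    intro x x'
    simp only [hρ_def]
    by_cases hx' : x' = b
    · rw [if_pos hx']
      by_cases hx : x = b
      · rw [if_pos hx]; linarith [hdnn x x']
      · rw [if_neg hx, hx', hα_def]
        linarith [hdtri a x b, hdsymm a x]
    · rw [if_neg hx']
      by_cases hx : x = b
      · rw [if_pos hx, hx, hα_def]
        linarith [hdtri a b x', hdsymm x' a]
      · rw [if_neg hx]
        linarith [hdtri x' x a, hdsymm x' x]
  have hρlb : ∀ x, x ≠ a → α ≤ ρ x := by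
    intro x hx
    by_cases hxb : x = b
    · simp [hρ_def, hxb]
    · simp only [hρ_def, if_neg hxb]
      exact hmin x a hx
  have hσpos : 0 < E / (1 + E) := by positivity
  have hσlt1 : E / (1 + E) < 1 := by
    rw [div_lt_one (by linarith)]; linarith
  have hh0pos : ∀ x, 0 < h0 x := fun x => by
    simp only [hh0_def]; positivity
  have hh0le : ∀ x, h0 x ≤ E / (1 + E) := by
    intro x
    simp only [hh0_def]
    have h1 : Real.exp (-ρ x) ≤ 1 := by
      rw [Real.exp_le_one_iff]
      by_cases hx : x = a
      · simp [hx, hρa]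
      · have := hρlb x hx; linarith
    nlinarith
  have hh0lt1 : ∀ x, h0 x < 1 := fun x => lt_of_le_of_lt (hh0le x) hσlt1
  have hh0a : h0 a = E / (1 + E) := by simp [hh0_def, hρa]
  have hh0b : h0 b = 1 / (1 + E) := by
    simp only [hh0_def, hρb]
    rw [Real.exp_neg, ← hE_def]
    field_simp
  have hh0priv : ∀ x x', h0 x ≤ Real.exp (d x x') * h0 x' := by
    intro x x'
    simp only [hh0_def]
    rw [show Real.exp (d x x') * (E / (1 + E) * Real.exp (-ρ x')) =
      (E / (1 + E)) * (Real.exp (d x x') * Real.exp (-ρ x')) by ring,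
      ← Real.exp_add]
    apply mul_le_mul_of_nonneg_left _ (le_of_lt hσpos)
    apply Real.exp_le_exp.mpr
    linarith [hρlip x x']
  have hh0ub : ∀ x x', x ≠ x' → h0 x' * (1 + Real.exp (d x x')) ≤ Real.exp (d x x') := by
    intro x x' hxx'
    have hFpos : 0 < Real.exp (d x x') := Real.exp_pos _
    have key : h0 x' ≤ Real.exp (d x x') / (1 + Real.exp (d x x')) := by
      by_cases hx' : x' = a
      · have hv : h0 x' = E / (1 + E) := by rw [hx', hh0a]
        rw [hv, hE_def]
        exact exp_ratio_mono (by
          have h := hmin x x' hxx'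
          rw [hx'] at h ⊢
          linarith)
      · have h1 : h0 x' ≤ (E / (1+E)) * Real.exp (-α) := by
          simp only [hh0_def]
          apply mul_le_mul_of_nonneg_left _ (le_of_lt hσpos)
          exact Real.exp_le_exp.mpr (by linarith [hρlb x' hx'])
        have h2 : (E / (1+E)) * Real.exp (-α) = 1 / (1 + E) := by
          rw [Real.exp_neg, ← hE_def]; field_simp
        have h3 : (1:ℝ) / (1 + E) ≤ 1 / 2 := by
          rw [div_le_div_iff₀ (by linarith) (by norm_num)]; linarith
        have h4 : (1:ℝ)/2 ≤ Real.exp (d x x') / (1 + Real.exp (d x x')) := by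
          rw [div_le_div_iff₀ (by norm_num) (by linarith)]
          have : 1 ≤ Real.exp (d x x') := by
            calc (1:ℝ) = Real.exp 0 := (Real.exp_zero).symm
            _ ≤ _ := Real.exp_le_exp.mpr (hdnn x x')
          linarith
        linarith
    have := (le_div_iff₀ (by linarith : (0:ℝ) < 1 + Real.exp (d x x'))).mp key
    linarith
  -- T0, T1, h1
  set T0 := h0 c with hT0_def
  have hene : (univ.erase c).Nonempty := ⟨a, Finset.mem_erase.mpr ⟨Ne.symm hca, mem_univ a⟩⟩
  set T1 := min (1/2 : ℝ) ((univ.erase c).inf' hene (fun x => Real.exp (d x c) * h0 x))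
    with hT1_def
  have hT0lt : T0 < 1/2 := by
    have h1 : T0 ≤ (E / (1+E)) * Real.exp (-α) := by
      simp only [hT0_def, hh0_def]
      apply mul_le_mul_of_nonneg_left _ (le_of_lt hσpos)
      exact Real.exp_le_exp.mpr (by linarith [hρlb c hca])
    have h2 : (E / (1+E)) * Real.exp (-α) = 1 / (1 + E) := by
      rw [Real.exp_neg, ← hE_def]; field_simp
    have h3 : (1:ℝ) / (1 + E) < 1 / 2 := by
      rw [div_lt_div_iff₀ (by linarith) (by norm_num)]; linarith
    linarith
  have hT01 : T0 < T1 := by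
    rw [hT1_def]
    apply lt_min hT0lt
    rw [Finset.lt_inf'_iff]
    intro x hx
    have hxc : x ≠ c := (Finset.mem_erase.mp hx).1
    have hkey : ρ x < d x c + d c a := by
      by_cases hxa : x = a
      · rw [hxa, hρa]
        have := hdpos a c (Ne.symm hca)
        have := hdpos c a hca
        linarith
      · by_cases hxb : x = b
        · rw [hxb, hρb]
          have h1 : α ≤ d b c := hmin b c (fun h => hcb h.symm)
          have h2 : 0 < d c a := hdpos c a hca
          linarith
        · have h1 : ρ x = d x a := by simp [hρ_def, hxb]
          have h2 : d x a ≤ d c a := hcmax' x hxa hxb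
          have h3 : 0 < d x c := hdpos x c hxc
          linarith
    have hT0v : T0 = (E / (1+E)) * Real.exp (-(d c a)) := by
      simp [hT0_def, hh0_def, hρc]
    rw [hT0v, show Real.exp (d x c) * h0 x
        = (E / (1+E)) * Real.exp (d x c + -ρ x) by
      simp only [hh0_def]; rw [Real.exp_add]; ring]
    apply mul_lt_mul_of_pos_left _ hσpos
    exact Real.exp_lt_exp.mpr (by linarith)
  have hT1le : T1 ≤ 1/2 := min_le_left _ _
  have hT1pos : 0 < T1 := lt_of_le_of_lt (le_of_lt (hh0pos c)) hT01
  have hT1ub : ∀ x, x ≠ c → T1 ≤ Real.exp (d x c) * h0 x := by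
    intro x hx
    exact le_trans (min_le_right _ _)
      (Finset.inf'_le _ (Finset.mem_erase.mpr ⟨hx, mem_univ x⟩))
  set h1 : X → ℝ := fun x => if x = c then T1 else h0 x with hh1_def
  have hh1a : h1 a = h0 a := by simp [hh1_def, Ne.symm hca]
  have hh1b : h1 b = h0 b := by simp [hh1_def, Ne.symm hcb]
  have hh1c : h1 c = T1 := by simp [hh1_def]
  have hh1pos : ∀ x, 0 < h1 x := by
    intro x
    simp only [hh1_def]
    split
    · exact hT1pos
    · exact hh0pos x
  have hh1lt1 : ∀ x, h1 x < 1 := by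
    intro x
    simp only [hh1_def]
    split
    · linarith
    · exact hh0lt1 x
  have hh1priv : ∀ x x', h1 x ≤ Real.exp (d x x') * h1 x' := by
    intro x x'
    simp only [hh1_def]
    by_cases hx : x = c <;> by_cases hx' : x' = c
    · rw [if_pos hx, if_pos hx', hx, hx', hd0, Real.exp_zero, one_mul]
    · rw [if_pos hx, if_neg hx', hx]
      have := hT1ub x' hx'
      rw [hdsymm c x']
      exact this
    · rw [if_neg hx, if_pos hx', hx']
      calc h0 x ≤ Real.exp (d x c) * h0 c := hh0priv x c
      _ ≤ Real.exp (d x c) * T1 := by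
          apply mul_le_mul_of_nonneg_left (le_of_lt hT01) (le_of_lt (Real.exp_pos _))
    · rw [if_neg hx, if_neg hx']
      exact hh0priv x x'
  have hh1ub : ∀ x x', x ≠ x' → h1 x' * (1 + Real.exp (d x x')) ≤ Real.exp (d x x') := by
    intro x x' hxx'
    have hF1 : 1 ≤ Real.exp (d x x') := by
      calc (1:ℝ) = Real.exp 0 := (Real.exp_zero).symm
      _ ≤ _ := Real.exp_le_exp.mpr (hdnn x x')
    by_cases hx' : x' = c
    · rw [hx'] at hF1 ⊢
      rw [hh1c]
      nlinarith [mul_le_mul_of_nonneg_right hT1le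
        (by positivity : (0:ℝ) ≤ 1 + Real.exp (d x c)), hF1]
    · have : h1 x' = h0 x' := by simp [hh1_def, hx']
      rw [this]
      exact hh0ub x x' hxx'
  have compl : ∀ (h : X → ℝ), (∀ x, 0 < h x) →
      (∀ x x', h x ≤ Real.exp (d x x') * h x') →
      (∀ x x', x ≠ x' → h x' * (1 + Real.exp (d x x')) ≤ Real.exp (d x x')) →
      ∀ x x', 1 - h x ≤ Real.exp (d x x') * (1 - h x') := by
    intro h hpos hpriv hub x x'
    by_cases hxx' : x = x'
    · rw [hxx', hd0, Real.exp_zero, one_mul]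
    · apply one_minus_lip _ _ _ (by
        calc (1:ℝ) = Real.exp 0 := (Real.exp_zero).symm
        _ ≤ _ := Real.exp_le_exp.mpr (hdnn x x'))
      · have := hpriv x' x
        rw [hdsymm x' x] at this
        exact this
      · exact le_of_lt (hpos x')
      · exact hub x x' hxx'
  have hh0priv2 := compl h0 hh0pos hh0priv hh0ub
  have hh1priv2 := compl h1 hh1pos hh1priv hh1ub
  -- the key consequence of universal optimality
  have hnpos : 0 < (Fintype.card X : ℝ) := by
    have : 0 < Fintype.card X := by omega
    exact_mod_cast this
  have hn0 : (Fintype.card X : ℝ) ≠ 0 := ne_of_gt hnpos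
  have key : ∀ (A B C : ℝ) (h : X → ℝ), (∀ x, 0 < h x) → (∀ x, h x < 1) →
      (∀ x x', h x ≤ Real.exp (d x x') * h x') →
      (∀ x x', 1 - h x ≤ Real.exp (d x x') * (1 - h x')) →
      A * h a + B * h b + C * h c ≤ ∑ y, max (A * M a y + B * M b y + C * M c y) 0 := by
    intro A B C h hpos hlt1 hpriv hpriv2
    set θ : X → ℝ := fun x =>
      A * (if x = a then 1 else 0) + B * (if x = b then 1 else 0) +
        C * (if x = c then 1 else 0) with hθ_def
    have hθsum : ∀ f : X → ℝ, ∑ x, θ x * f x = A * f a + B * f b + C * f c := by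
      intro f
      have hpt : ∀ x, θ x * f x =
          (if x = a then A * f x else 0) + (if x = b then B * f x else 0) +
            (if x = c then C * f x else 0) := by
        intro x
        simp only [hθ_def]
        split_ifs <;> ring
      rw [Finset.sum_congr rfl fun x _ => hpt x]
      rw [Finset.sum_add_distrib, Finset.sum_add_distrib]
      rw [Finset.sum_ite_eq' univ a (fun x => A * f x),
        Finset.sum_ite_eq' univ b (fun x => B * f x),
        Finset.sum_ite_eq' univ c (fun x => C * f x)]
      simp
    set π : X → ℝ := fun _ => (Fintype.card X : ℝ)⁻¹ with hπ_def
    set ℓ : Bool → X → ℝ := fun w x => if w then 0 else -((Fintype.card X : ℝ) * θ x)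
      with hℓ_def
    set N : X → Bool → ℝ := fun x w => if w then h x else 1 - h x with hN_def
    have hπ : IsPrior π := by
      constructor
      · intro x; simp only [hπ_def]; positivity
      · simp only [hπ_def]
        rw [Finset.sum_const, Finset.card_univ, nsmul_eq_mul]
        field_simp
    have hNch : IsChannel N := by
      constructor
      · intro x w
        cases w
        · simp only [hN_def, if_neg (by simp : ¬(false = true))]
          linarith [hlt1 x]
        · simp only [hN_def, if_pos rfl]
          linarith [hpos x]
      · intro x
        rw [Fintype.sum_bool]
        simp only [hN_def]
        norm_num
    have hNpriv : IsPrivate d N := by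
      intro x x' w
      cases w
      · simp only [hN_def, if_neg (by simp : ¬(false = true))]
        exact hpriv2 x x'
      · simp only [hN_def, if_pos rfl]
        exact hpriv x x'
    have hcalc : ∀ (K : Type) (_ : Fintype K) (_ : Nonempty K) (T : X → K → ℝ),
        postLoss π T ℓ = -(∑ k, max (∑ x, θ x * T x k) 0) := by
      intro K _ _ T
      unfold postLoss
      rw [← Finset.sum_neg_distrib]
      apply Finset.sum_congr rfl
      intro k _
      rw [inf'_bool]
      have hfalse : (∑ x, π x * T x k * ℓ false x) = -(∑ x, θ x * T x k) := by
        rw [← Finset.sum_neg_distrib]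
        apply Finset.sum_congr rfl
        intro x _
        simp only [hπ_def, hℓ_def, if_neg (by simp : ¬(false = true))]
        field_simp
      have htrue : (∑ x, π x * T x k * ℓ true x) = 0 := by
        simp [hℓ_def]
      rw [hfalse, htrue]
      have hminmax : ∀ t : ℝ, min (-t) (0:ℝ) = -(max t 0) := by
        intro t
        rcases le_total t 0 with ht|ht
        · rw [max_eq_right ht, min_eq_right (by linarith), neg_zero]
        · rw [max_eq_left ht, min_eq_left (by linarith)]
      exact hminmax _
    have hle := hopt Bool ℓ π hπ Bool N hNch hNpriv
    rw [hcalc Y inferInstance inferInstance M, hcalc Bool inferInstance inferInstance N] at hle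
    have hNtrue : (∑ x, θ x * N x true) = A * h a + B * h b + C * h c := by
      have hnt : ∀ x, N x true = h x := fun x => by simp [hN_def]
      rw [Finset.sum_congr rfl fun x _ => by rw [hnt x]]
      exact hθsum h
    have hsumN : (∑ k, max (∑ x, θ x * N x k) 0) =
        max (∑ x, θ x * N x true) 0 + max (∑ x, θ x * N x false) 0 :=
      Fintype.sum_bool _
    have h1 : (∑ y, max (A * M a y + B * M b y + C * M c y) 0) =
        ∑ y, max (∑ x, θ x * M x y) 0 := by
      apply Finset.sum_congr rfl
      intro y _
      rw [hθsum (fun x => M x y)]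
    rw [h1]
    have h2 : A * h a + B * h b + C * h c ≤ max (∑ x, θ x * N x true) 0 := by
      rw [hNtrue]
      exact le_max_left _ _
    have h3 : (0:ℝ) ≤ max (∑ x, θ x * N x false) 0 := le_max_right _ _
    rw [hsumN] at hle
    linarith
  -- instantiate the key inequality
  have hgap : 1 * h0 a + (-1) * h0 b = (E-1)/(E+1) := by
    rw [hh0a, hh0b]
    field_simp
    ring
  have hkey0 : (E-1)/(E+1) ≤ ∑ y, max (M a y - M b y) 0 := by
    have hk := key 1 (-1) 0 h0 hh0pos hh0lt1 hh0priv hh0priv2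
    calc (E-1)/(E+1) = 1 * h0 a + (-1) * h0 b + 0 * h0 c := by rw [hgap]; ring
    _ ≤ ∑ y, max (1 * M a y + (-1) * M b y + 0 * M c y) 0 := hk
    _ = ∑ y, max (M a y - M b y) 0 := by
        apply Finset.sum_congr rfl
        intro y _
        rw [show 1 * M a y + (-1) * M b y + 0 * M c y = M a y - M b y by ring]
  have hkey1 : ∀ ε : ℝ, (E-1)/(E+1) + ε * T1 ≤
      ∑ y, max ((M a y - M b y) + ε * M c y) 0 := by
    intro ε
    have hk := key 1 (-1) ε h1 hh1pos hh1lt1 hh1priv hh1priv2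
    calc (E-1)/(E+1) + ε * T1 = 1 * h1 a + (-1) * h1 b + ε * h1 c := by
          rw [hh1a, hh1b, hh1c, ← hgap]
    _ ≤ ∑ y, max (1 * M a y + (-1) * M b y + ε * M c y) 0 := hk
    _ = ∑ y, max ((M a y - M b y) + ε * M c y) 0 := by
        apply Finset.sum_congr rfl
        intro y _
        rw [show 1 * M a y + (-1) * M b y + ε * M c y = (M a y - M b y) + ε * M c y by ring]
  have hkey2 : ∀ ε : ℝ, (E-1)/(E+1) - ε * T0 ≤
      ∑ y, max ((M a y - M b y) - ε * M c y) 0 := by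
    intro ε
    have hk := key 1 (-1) (-ε) h0 hh0pos hh0lt1 hh0priv hh0priv2
    calc (E-1)/(E+1) - ε * T0 = 1 * h0 a + (-1) * h0 b + (-ε) * h0 c := by
          rw [← hgap, ← hT0_def]; ring
    _ ≤ ∑ y, max (1 * M a y + (-1) * M b y + (-ε) * M c y) 0 := hk
    _ = ∑ y, max ((M a y - M b y) - ε * M c y) 0 := by
        apply Finset.sum_congr rfl
        intro y _
        rw [show 1 * M a y + (-1) * M b y + (-ε) * M c y = (M a y - M b y) - ε * M c y by ring]
  -- final contradiction: clean up the context first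
  have hEab : E = Real.exp (d a b) := by rw [hE_def, hα_def]
  clear_value T1 T0
  clear hT0_def hT1_def hT0lt hT1le hT1pos hT1ub hene
  clear hh1a hh1b hh1c hh1pos hh1lt1 hh1priv hh1ub hh1priv2
  clear hh0a hh0b hh0pos hh0le hh0lt1 hh0priv hh0ub hh0priv2
  clear compl key hgap hρa hρb hρc hρlip hρlb hσpos hσlt1 hnpos hn0 hopt
  clear hh1_def h1 hh0_def h0 hρ_def ρ
  clear hαpos hα_def hE_def
  clear_value E
  clear α hmin hcmax' hcmem hQne hq0mem hq0min hPne hab0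
  set V := (E-1)/(E+1) with hV_def
  have hE1' : (0:ℝ) < E - 1 := by linarith
  have hVpos : 0 < V := by rw [hV_def]; positivity
  have hMnn := hMch.1
  have hMle1 : ∀ x y, M x y ≤ 1 := by
    intro x y
    have h1 : M x y ≤ ∑ y', M x y' :=
      Finset.single_le_sum (fun y' _ => hMnn x y') (Finset.mem_univ y)
    rw [hMch.2 x] at h1
    exact h1
  set p : Y → ℝ := fun y => M a y - M b y with hp_def
  have upper : ∀ e' : ℝ, -((E-1)/E) ≤ e' → e' ≤ (E-1)/E →
      ∑ y, max (p y + e' * M a y) 0 ≤ (E - 1 + e' * E)/(E + 1) := by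
    intro e' hlb hub
    set S := univ.filter (fun y => 0 < p y + e' * M a y) with hS_def
    set ga := ∑ y ∈ S, M a y with hga_def
    set gb := ∑ y ∈ S, M b y with hgb_def
    have h1 : ∑ y, max (p y + e' * M a y) 0 = (1 + e') * ga - gb := by
      have hpt : ∀ y : Y, max (p y + e' * M a y) 0 =
          if 0 < p y + e' * M a y then p y + e' * M a y else 0 := by
        intro y; split
        · exact max_eq_left (le_of_lt ‹_›)
        · exact max_eq_right (le_of_not_gt ‹_›)
      rw [Finset.sum_congr rfl fun y _ => hpt y, ← Finset.sum_filter, ← hS_def]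
      have hterm : ∀ y ∈ S, p y + e' * M a y = (1 + e') * M a y - M b y := by
        intro y _; simp only [hp_def]; ring
      rw [Finset.sum_congr rfl hterm, Finset.sum_sub_distrib, ← Finset.mul_sum]
    have hs1 : ga ≤ E * gb := by
      rw [hga_def, hgb_def, Finset.mul_sum]
      apply Finset.sum_le_sum
      intro y _
      have h := hMpriv a b y
      rw [← hEab] at h
      exact h
    have hsplitA : ∑ y ∈ univ \ S, M a y + ga = 1 := by
      rw [hga_def, Finset.sum_sdiff (Finset.filter_subset _ _)]
      exact hMch.2 a
    have hsplitB : ∑ y ∈ univ \ S, M b y + gb = 1 := by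
      rw [hgb_def, Finset.sum_sdiff (Finset.filter_subset _ _)]
      exact hMch.2 b
    have hs2 : 1 - gb ≤ E * (1 - ga) := by
      have hb1 : 1 - gb = ∑ y ∈ univ \ S, M b y := by linarith
      have ha1 : 1 - ga = ∑ y ∈ univ \ S, M a y := by linarith
      rw [hb1, ha1, Finset.mul_sum]
      apply Finset.sum_le_sum
      intro y _
      have h := hMpriv b a y
      rw [hdsymm b a, ← hEab] at h
      exact h
    clear hsplitA hsplitB
    clear_value ga gb
    clear hga_def hgb_def hS_def S
    have hc1 : 0 ≤ E - 1 - e' := by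
      have : (E-1)/E ≤ E - 1 := by
        rw [div_le_iff₀ hEpos]; nlinarith
      linarith
    have hc2 : 0 ≤ E - 1 + e' * E := by
      have h := mul_le_mul_of_nonneg_right hlb (le_of_lt hEpos)
      have h2 : (E-1)/E * E = E - 1 := div_mul_cancel₀ _ (ne_of_gt hEpos)
      have h3 : -((E-1)/E) * E = -(E-1) := by rw [neg_mul, h2]
      linarith [h]
    have hp1 : 0 ≤ (E - 1 - e') * (E * gb - ga) := mul_nonneg hc1 (by linarith)
    have hp2 : 0 ≤ (E - 1 + e' * E) * (E - 1 - E * ga + gb) := mul_nonneg hc2 (by linarith)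
    rw [h1, le_div_iff₀ (by linarith : (0:ℝ) < E + 1)]
    have aux : (((1 + e') * ga - gb) * (E + 1)) * (E - 1) ≤ (E - 1 + e' * E) * (E - 1) := by
      nlinarith [hp1, hp2]
    exact (mul_le_mul_iff_of_pos_right hE1').mp aux
  set V0 := ∑ y, max (p y) 0 with hV0_def
  have hV0eqV : V0 = V := by
    have hdiv : (0:ℝ) ≤ (E-1)/E := by positivity
    have hup := upper 0 (by linarith) (by linarith)
    simp only [zero_mul, add_zero] at hup
    have hlo : V ≤ V0 := hkey0
    have : V0 ≤ V := by rw [hV_def]; exact hup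
    linarith
  by_cases hPne2 : (univ.filter (fun y => p y ≠ 0)).Nonempty
  swap
  · have hall : ∀ y : Y, p y = 0 := by
      intro y
      by_contra hy
      exact hPne2 ⟨y, Finset.mem_filter.mpr ⟨Finset.mem_univ y, hy⟩⟩
    have hz : V0 = 0 := by
      rw [hV0_def]
      apply Finset.sum_eq_zero
      intro y _
      rw [hall y]
      simp
    rw [hV0eqV] at hz
    linarith
  set m := (univ.filter (fun y => p y ≠ 0)).inf' hPne2 (fun y => |p y|) with hm_def
  have hmpos : 0 < m := by
    rw [hm_def, Finset.lt_inf'_iff]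
    intro y hy
    exact abs_pos.mpr (Finset.mem_filter.mp hy).2
  have hmle : ∀ y, p y ≠ 0 → m ≤ |p y| := by
    intro y hy
    exact Finset.inf'_le _ (Finset.mem_filter.mpr ⟨Finset.mem_univ y, hy⟩)
  set ε := min ((E-1)/E) (m/2) with hε_def
  have hεpos : 0 < ε := by
    rw [hε_def]
    apply lt_min (by positivity) (by linarith)
  have hεE : ε ≤ (E-1)/E := min_le_left _ _
  have hεsmall : ∀ y, p y ≠ 0 → ε < |p y| := by
    intro y hy
    calc ε ≤ m/2 := min_le_right _ _
    _ < m := by linarith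
    _ ≤ |p y| := hmle y hy
  have expand : ∀ w : Y → ℝ, (∀ y, 0 ≤ w y) → (∀ y, w y ≤ 1) →
      (∑ y, max (p y + ε * w y) 0 =
        V0 + ε * ∑ y, (if 0 ≤ p y then w y else 0)) ∧
      (∑ y, max (p y - ε * w y) 0 =
        V0 - ε * ∑ y, (if 0 < p y then w y else 0)) := by
    intro w hw0 hw1
    have hbig : ∀ y : Y, p y < 0 → ε * w y < -(p y) := by
      intro y hy
      have h2 : ε < |p y| := hεsmall y (ne_of_lt hy)
      rw [abs_of_neg hy] at h2
      have h3 : ε * w y ≤ ε * 1 := mul_le_mul_of_nonneg_left (hw1 y) (le_of_lt hεpos)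
      linarith
    have hbig' : ∀ y : Y, 0 < p y → ε * w y < p y := by
      intro y hy
      have h2 : ε < |p y| := hεsmall y (ne_of_gt hy)
      rw [abs_of_pos hy] at h2
      have h3 : ε * w y ≤ ε * 1 := mul_le_mul_of_nonneg_left (hw1 y) (le_of_lt hεpos)
      linarith
    constructor
    · have hpt : ∀ y : Y, max (p y + ε * w y) 0 =
          max (p y) 0 + ε * (if 0 ≤ p y then w y else 0) := by
        intro y
        have hnn : 0 ≤ ε * w y := mul_nonneg (le_of_lt hεpos) (hw0 y)
        rcases lt_trichotomy (p y) 0 with hy|hy|hy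
        · rw [max_eq_right (by linarith [hbig y hy]), max_eq_right (le_of_lt hy),
            if_neg (not_le.mpr hy)]
          ring
        · rw [hy, zero_add, max_eq_left hnn, if_pos (le_refl (0:ℝ))]
          simp
        · rw [max_eq_left (by linarith), max_eq_left (le_of_lt hy), if_pos (le_of_lt hy)]
      rw [Finset.sum_congr rfl fun y _ => hpt y, Finset.sum_add_distrib, ← Finset.mul_sum]
    · have hpt : ∀ y : Y, max (p y - ε * w y) 0 =
          max (p y) 0 - ε * (if 0 < p y then w y else 0) := by
        intro y
        have hnn : 0 ≤ ε * w y := mul_nonneg (le_of_lt hεpos) (hw0 y)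
        rcases lt_trichotomy (p y) 0 with hy|hy|hy
        · rw [max_eq_right (by linarith), max_eq_right (le_of_lt hy),
            if_neg (by linarith : ¬ 0 < p y)]
          ring
        · rw [hy, zero_sub, max_eq_right (by linarith), max_eq_left (le_refl (0:ℝ)),
            if_neg (by linarith : ¬ (0:ℝ) < 0)]
          ring
        · rw [max_eq_left (by linarith [hbig' y hy]), max_eq_left (le_of_lt hy), if_pos hy]
      rw [Finset.sum_congr rfl fun y _ => hpt y, Finset.sum_sub_distrib, ← Finset.mul_sum]
  have expandc := expand (fun y => M c y) (fun y => hMnn c y) (fun y => hMle1 c y)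
  have expanda := expand (fun y => M a y) (fun y => hMnn a y) (fun y => hMle1 a y)
  set Ac := ∑ y, (if 0 < p y then M c y else 0) with hAc_def
  set Cc := ∑ y, (if 0 ≤ p y then M c y else 0) with hCc_def
  set Aa := ∑ y, (if 0 < p y then M a y else 0) with hAa_def
  set Ca := ∑ y, (if 0 ≤ p y then M a y else 0) with hCa_def
  have hC1 : T1 ≤ Cc := by
    have k1 := hkey1 ε
    have e1 : ∑ y, max (p y + ε * M c y) 0 = V0 + ε * Cc := expandc.1
    have hsame : (∑ y, max ((M a y - M b y) + ε * M c y) 0) =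
        ∑ y, max (p y + ε * M c y) 0 := rfl
    rw [hsame, e1, hV0eqV] at k1
    have : ε * T1 ≤ ε * Cc := by linarith
    exact le_of_mul_le_mul_left this hεpos
  have hC2 : Ac ≤ T0 := by
    have k2 := hkey2 ε
    have e2 : ∑ y, max (p y - ε * M c y) 0 = V0 - ε * Ac := expandc.2
    have hsame : (∑ y, max ((M a y - M b y) - ε * M c y) 0) =
        ∑ y, max (p y - ε * M c y) 0 := rfl
    rw [hsame, e2, hV0eqV] at k2
    have : ε * Ac ≤ ε * T0 := by linarith
    exact le_of_mul_le_mul_left this hεpos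
  have hrhs : ∀ e'' : ℝ, (E - 1 + e'' * E)/(E + 1) = V + e'' * (E/(E+1)) := by
    intro e''
    rw [hV_def]
    field_simp
  have hC3 : Ca ≤ E/(E+1) := by
    have k3 := upper ε (by
      have hdiv : (0:ℝ) ≤ (E-1)/E := by positivity
      linarith) hεE
    have e3 : ∑ y, max (p y + ε * M a y) 0 = V0 + ε * Ca := expanda.1
    rw [e3, hV0eqV, hrhs ε] at k3
    have : ε * Ca ≤ ε * (E/(E+1)) := by linarith
    exact le_of_mul_le_mul_left this hεpos
  have hC4 : E/(E+1) ≤ Aa := by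
    have hdiv : (0:ℝ) ≤ (E-1)/E := by positivity
    have k4 := upper (-ε) (by linarith) (by linarith)
    have hsame : (∑ y, max (p y + (-ε) * M a y) 0) =
        ∑ y, max (p y - ε * M a y) 0 := by
      apply Finset.sum_congr rfl
      intro y _
      rw [show p y + (-ε) * M a y = p y - ε * M a y by ring]
    have e4 : ∑ y, max (p y - ε * M a y) 0 = V0 - ε * Aa := expanda.2
    rw [hsame, e4, hV0eqV, hrhs (-ε)] at k4
    have : ε * (E/(E+1)) ≤ ε * Aa := by linarith
    exact le_of_mul_le_mul_left this hεpos
  have hBa : ∑ y, (if p y = 0 then M a y else 0) = Ca - Aa := by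
    rw [hCa_def, hAa_def, ← Finset.sum_sub_distrib]
    apply Finset.sum_congr rfl
    intro y _
    rcases lt_trichotomy (p y) 0 with hy|hy|hy
    · rw [if_neg (ne_of_lt hy), if_neg (not_le.mpr hy), if_neg (by linarith : ¬ 0 < p y)]
      ring
    · rw [if_pos hy, if_pos (by linarith : (0:ℝ) ≤ p y), if_neg (by rw [hy]; exact lt_irrefl 0)]
      ring
    · rw [if_neg (ne_of_gt hy), if_pos (le_of_lt hy), if_pos hy]
      ring
  have hBc : ∑ y, (if p y = 0 then M c y else 0) = Cc - Ac := by
    rw [hCc_def, hAc_def, ← Finset.sum_sub_distrib]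
    apply Finset.sum_congr rfl
    intro y _
    rcases lt_trichotomy (p y) 0 with hy|hy|hy
    · rw [if_neg (ne_of_lt hy), if_neg (not_le.mpr hy), if_neg (by linarith : ¬ 0 < p y)]
      ring
    · rw [if_pos hy, if_pos (by linarith : (0:ℝ) ≤ p y), if_neg (by rw [hy]; exact lt_irrefl 0)]
      ring
    · rw [if_neg (ne_of_gt hy), if_pos (le_of_lt hy), if_pos hy]
      ring
  have hBanp : ∑ y, (if p y = 0 then M a y else 0) ≤ 0 := by
    rw [hBa]; linarith
  have hBcpos : 0 < ∑ y, (if p y = 0 then M c y else 0) := by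
    rw [hBc]; linarith
  have hzero : (∑ y : Y, (0:ℝ)) < ∑ y, (if p y = 0 then M c y else 0) := by
    simpa using hBcpos
  obtain ⟨y0, _, hy0⟩ := Finset.exists_lt_of_sum_lt hzero
  have hpy0 : p y0 = 0 := by
    by_contra hne
    rw [if_neg hne] at hy0
    exact lt_irrefl 0 hy0
  rw [if_pos hpy0] at hy0
  have hMay0 : M a y0 = 0 := by
    have hterm : (if p y0 = 0 then M a y0 else 0) ≤ ∑ y, (if p y = 0 then M a y else 0) := by
      apply Finset.single_le_sum (fun y _ => ?_) (Finset.mem_univ y0)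
      split
      · exact hMnn a y
      · exact le_refl 0
    rw [if_pos hpy0] at hterm
    have := hMnn a y0
    linarith
  have hcontra := hMpriv c a y0
  rw [hMay0, mul_zero] at hcontra
  linarith
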